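/- arXiv:1312.1481 — 3 statements merged into one kernel-verified Lean document; each statement's English description precedes it below -/
import Mathlib

section
/- Let δ > 0 and let G : ℝ → ℂ be a measurable function. Then ∫_ℝ ∫₀^δ ξ² · ( 2·sinh(ξ(η − δ))² + cosh(ξ(η − δ))² ) / cosh(ξδ)² · |G(ξ)|² dη dξ ≤ 2 · ∫_ℝ |ξ| · |G(ξ)|² dξ. -/
open MeasureTheory

lemma key_calc (δ ξ : ℝ) (hδ : 0 < δ) :
    ∫ η in (0:ℝ)..δ, ξ ^ 2 *
        (2 * Real.sinh (ξ * (η - δ)) ^ 2 + Real.cosh (ξ * (η - δ)) ^ 2) /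
          Real.cosh (ξ * δ) ^ 2
      = ((3/4) * ξ * Real.sinh (2 * (ξ * δ)) - ξ ^ 2 * δ / 2) / Real.cosh (ξ * δ) ^ 2 := by
  set c : ℝ := Real.cosh (ξ * δ) ^ 2 with hc
  have hderiv : ∀ η ∈ Set.uIcc (0:ℝ) δ,
      HasDerivAt (fun η => ((3/4) * ξ * Real.sinh (2 * (ξ * (η - δ))) - ξ ^ 2 * η / 2) / c)
        (ξ ^ 2 * (2 * Real.sinh (ξ * (η - δ)) ^ 2 + Real.cosh (ξ * (η - δ)) ^ 2) / c) η := by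
    intro η _
    have h1 : HasDerivAt (fun η : ℝ => 2 * (ξ * (η - δ))) (2 * ξ) η := by
      simpa using (((hasDerivAt_id η).sub_const δ).const_mul ξ).const_mul 2
    have h2 := (h1.sinh).const_mul ((3/4) * ξ)
    have h3 : HasDerivAt (fun η : ℝ => ξ ^ 2 * η / 2) (ξ ^ 2 / 2) η := by
      simpa using ((hasDerivAt_id η).const_mul (ξ ^ 2)).div_const 2
    have h4 := (h2.sub h3).div_const c
    refine h4.congr_deriv ?_
    have hs : Real.sinh (ξ * (η - δ)) ^ 2 = Real.cosh (ξ * (η - δ)) ^ 2 - 1 :=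
      Real.sinh_sq _
    have hct : Real.cosh (2 * (ξ * (η - δ))) = Real.cosh (ξ * (η - δ)) ^ 2 + Real.sinh (ξ * (η - δ)) ^ 2 :=
      Real.cosh_two_mul _
    rw [hct, hs]
    ring
  have := intervalIntegral.integral_eq_sub_of_hasDerivAt hderiv ?_
  · rw [this]
    simp only [sub_self, mul_zero, Real.sinh_zero]
    rw [show (2 : ℝ) * (ξ * ((0:ℝ) - δ)) = -(2 * (ξ * δ)) by ring, Real.sinh_neg]
    ring
  · apply Continuous.intervalIntegrable
    continuity

lemma key (δ ξ : ℝ) (hδ : 0 < δ) :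
    ∫⁻ η in Set.Ioo (0:ℝ) δ, ENNReal.ofReal (ξ ^ 2 *
        (2 * Real.sinh (ξ * (η - δ)) ^ 2 + Real.cosh (ξ * (η - δ)) ^ 2) /
          Real.cosh (ξ * δ) ^ 2)
      ≤ ENNReal.ofReal (2 * |ξ|) := by
  set f : ℝ → ℝ := fun η => ξ ^ 2 *
        (2 * Real.sinh (ξ * (η - δ)) ^ 2 + Real.cosh (ξ * (η - δ)) ^ 2) /
          Real.cosh (ξ * δ) ^ 2 with hf
  have hcpos : (0:ℝ) < Real.cosh (ξ * δ) ^ 2 := by positivity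
  have hnn : ∀ η, 0 ≤ f η := by
    intro η
    apply div_nonneg _ hcpos.le
    positivity
  have hfc : Continuous f := by fun_prop
  have hint : IntegrableOn f (Set.Ioo 0 δ) := by
    exact (hfc.integrableOn_Icc (a := 0) (b := δ)).mono_set Set.Ioo_subset_Icc_self
  rw [← ofReal_integral_eq_lintegral_ofReal hint (Filter.Eventually.of_forall hnn)]
  apply ENNReal.ofReal_le_ofReal
  have hio : ∫ η in Set.Ioo (0:ℝ) δ, f η = ∫ η in (0:ℝ)..δ, f η := by
    rw [intervalIntegral.integral_of_le hδ.le, MeasureTheory.integral_Ioc_eq_integral_Ioo]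
  rw [hio, key_calc δ ξ hδ]
  -- now show ((3/4) ξ sinh(2ξδ) - ξ²δ/2)/cosh² ≤ 2|ξ|
  rw [div_le_iff₀ hcpos]
  have hs2 : Real.sinh (2 * (ξ * δ)) = 2 * Real.sinh (ξ * δ) * Real.cosh (ξ * δ) :=
    Real.sinh_two_mul _
  have habs : ξ * Real.sinh (ξ * δ) ≤ |ξ| * Real.cosh (ξ * δ) := by
    calc ξ * Real.sinh (ξ * δ) ≤ |ξ * Real.sinh (ξ * δ)| := le_abs_self _
    _ = |ξ| * |Real.sinh (ξ * δ)| := abs_mul _ _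
    _ ≤ |ξ| * Real.cosh (ξ * δ) := by
        apply mul_le_mul_of_nonneg_left _ (abs_nonneg ξ)
        rw [abs_le]
        constructor <;> nlinarith [Real.sinh_sq (ξ * δ), Real.cosh_pos (x := ξ * δ)]
  have hcosh1 : 1 ≤ Real.cosh (ξ * δ) := Real.one_le_cosh _
  rw [hs2]
  nlinarith [mul_le_mul_of_nonneg_right habs (Real.cosh_pos (x := ξ * δ)).le,
    mul_nonneg (abs_nonneg ξ) hcpos.le, mul_nonneg (sq_nonneg ξ) hδ.le]

/-- For `δ > 0` and measurable `G : ℝ → ℂ`,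
`∫_ℝ ∫₀^δ ξ² (2 sinh(ξ(η-δ))² + cosh(ξ(η-δ))²)/cosh(ξδ)² |G(ξ)|² dη dξ
  ≤ 2 ∫_ℝ |ξ| |G(ξ)|² dξ`, understood in `[0, ∞]`. -/
theorem stmt_8 (δ : ℝ) (hδ : 0 < δ) (G : ℝ → ℂ) (hG : Measurable G) :
    ∫⁻ ξ : ℝ, ∫⁻ η in Set.Ioo (0 : ℝ) δ,
        ENNReal.ofReal (ξ ^ 2 *
          (2 * Real.sinh (ξ * (η - δ)) ^ 2 + Real.cosh (ξ * (η - δ)) ^ 2) /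
            Real.cosh (ξ * δ) ^ 2 * ‖G ξ‖ ^ 2) ≤
      2 * ∫⁻ ξ : ℝ, ENNReal.ofReal (|ξ| * ‖G ξ‖ ^ 2) := by
  rw [← lintegral_const_mul' 2 _ (by norm_num)]
  apply lintegral_mono
  intro ξ
  have hcpos : (0:ℝ) < Real.cosh (ξ * δ) ^ 2 := by positivity
  have hnn : ∀ η : ℝ, 0 ≤ ξ ^ 2 *
        (2 * Real.sinh (ξ * (η - δ)) ^ 2 + Real.cosh (ξ * (η - δ)) ^ 2) /
          Real.cosh (ξ * δ) ^ 2 := by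
    intro η; apply div_nonneg _ hcpos.le; positivity
  calc ∫⁻ η in Set.Ioo (0 : ℝ) δ,
        ENNReal.ofReal (ξ ^ 2 *
          (2 * Real.sinh (ξ * (η - δ)) ^ 2 + Real.cosh (ξ * (η - δ)) ^ 2) /
            Real.cosh (ξ * δ) ^ 2 * ‖G ξ‖ ^ 2)
      = (∫⁻ η in Set.Ioo (0 : ℝ) δ,
        ENNReal.ofReal (ξ ^ 2 *
          (2 * Real.sinh (ξ * (η - δ)) ^ 2 + Real.cosh (ξ * (η - δ)) ^ 2) /
            Real.cosh (ξ * δ) ^ 2)) * ENNReal.ofReal (‖G ξ‖ ^ 2) := by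
        rw [← lintegral_mul_const' _ _ (by simp [ENNReal.ofReal_ne_top])]
        congr 1 with η
        rw [← ENNReal.ofReal_mul (hnn η)]
    _ ≤ ENNReal.ofReal (2 * |ξ|) * ENNReal.ofReal (‖G ξ‖ ^ 2) := by
        exact mul_le_mul_left (key δ ξ hδ) _
    _ = 2 * ENNReal.ofReal (|ξ| * ‖G ξ‖ ^ 2) := by
        rw [ENNReal.ofReal_mul (by positivity), ENNReal.ofReal_mul (abs_nonneg ξ)]
        rw [← mul_assoc]
        norm_num
end

section
/- There exists a constant C > 0 such that for every δ ∈ (0, 1] and every measurable function G : ℝ → ℂ, ∫_ℝ ∫₀^δ [ (1 + ξ²) · sinh(ξ(η − δ))² / ξ² + cosh(ξ(η − δ))² ] / cosh(ξδ)² · |G(ξ)|² dη dξ ≤ C · δ · ∫_ℝ (1 + ξ²)^{1/2} |G(ξ)|² dξ (the integrand is defined for ξ ≠ 0, and the point ξ = 0 is Lebesgue-null). -/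
open MeasureTheory

lemma sinh_le_mul_cosh {t : ℝ} (ht : 0 ≤ t) : Real.sinh t ≤ t * Real.cosh t := by
  have hmono : Monotone (fun t : ℝ => t * Real.cosh t - Real.sinh t) := by
    have hd : ∀ x : ℝ, HasDerivAt (fun t : ℝ => t * Real.cosh t - Real.sinh t)
        (x * Real.sinh x) x := by
      intro x
      have h1 := (hasDerivAt_id x).mul (Real.hasDerivAt_cosh x)
      have h2 := Real.hasDerivAt_sinh x
      refine (h1.sub h2).congr_deriv ?_
      simp only [id_eq]
      ring
    apply monotone_of_deriv_nonneg
    · exact fun x => (hd x).differentiableAt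
    · intro x
      rw [(hd x).deriv]
      rcases le_total 0 x with h | h
      · exact mul_nonneg h (by rwa [Real.sinh_nonneg_iff])
      · have hs : Real.sinh x ≤ 0 := by rwa [Real.sinh_nonpos_iff]
        nlinarith
  have := hmono ht
  simp only [Real.sinh_zero, Real.cosh_zero, mul_one, zero_mul, sub_zero] at this
  linarith

lemma key_bound (δ ξ η : ℝ) (hδ : 0 < δ) (hδ1 : δ ≤ 1) (hη0 : 0 < η) (hηδ : η < δ) :
    ((1 + ξ ^ 2) * Real.sinh (ξ * (η - δ)) ^ 2 / ξ ^ 2 + Real.cosh (ξ * (η - δ)) ^ 2) /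
        Real.cosh (ξ * δ) ^ 2 ≤ 3 * (1 + ξ ^ 2) ^ ((1 : ℝ) / 2) := by
  have h1 : (1 : ℝ) ≤ (1 + ξ ^ 2) ^ ((1 : ℝ) / 2) :=
    Real.one_le_rpow (by nlinarith [sq_nonneg ξ]) (by norm_num)
  have hmain : ((1 + ξ ^ 2) * Real.sinh (ξ * (η - δ)) ^ 2 / ξ ^ 2 +
      Real.cosh (ξ * (η - δ)) ^ 2) / Real.cosh (ξ * δ) ^ 2 ≤ 3 := by
    have hD1 : (1 : ℝ) ≤ Real.cosh (ξ * δ) := Real.one_le_cosh _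
    have hD2 : (0 : ℝ) < Real.cosh (ξ * δ) ^ 2 := by positivity
    rcases eq_or_ne ξ 0 with rfl | hξ
    · simp
    · have hξ2 : (0 : ℝ) < ξ ^ 2 := by positivity
      have habs : |ξ * (η - δ)| ≤ |ξ * δ| := by
        rw [abs_mul, abs_mul]
        apply mul_le_mul_of_nonneg_left _ (abs_nonneg ξ)
        rw [abs_of_nonpos (by linarith), abs_of_pos hδ]
        linarith
      have hc : Real.cosh (ξ * (η - δ)) ≤ Real.cosh (ξ * δ) := Real.cosh_le_cosh.mpr habs
      have hc0 : (0 : ℝ) < Real.cosh (ξ * (η - δ)) := Real.cosh_pos _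
      have hc2 : Real.cosh (ξ * (η - δ)) ^ 2 ≤ Real.cosh (ξ * δ) ^ 2 := by nlinarith
      have hsabs : |Real.sinh (ξ * (η - δ))| ≤ |Real.sinh (ξ * δ)| := by
        rw [Real.abs_sinh, Real.abs_sinh]
        exact Real.sinh_le_sinh.mpr habs
      have hs2 : Real.sinh (ξ * (η - δ)) ^ 2 ≤ Real.sinh (ξ * δ) ^ 2 := by
        have := pow_le_pow_left₀ (abs_nonneg _) hsabs 2
        simpa [sq_abs] using this
      -- the key estimate: (1+ξ²)·sinh(ξ(η-δ))² ≤ 2 ξ² cosh(ξδ)²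
      have hkey : (1 + ξ ^ 2) * Real.sinh (ξ * (η - δ)) ^ 2 ≤
          2 * ξ ^ 2 * Real.cosh (ξ * δ) ^ 2 := by
        rcases le_total (ξ ^ 2) 1 with hle | hge
        · -- small ξ: sinh(ξδ)² ≤ (ξδ)² cosh(ξδ)² ≤ ξ² cosh(ξδ)²
          have ht := sinh_le_mul_cosh (abs_nonneg (ξ * δ))
          rw [Real.cosh_abs] at ht
          rw [← Real.abs_sinh] at ht
          have hsinh0 : 0 ≤ |Real.sinh (ξ * δ)| := abs_nonneg _
          have hsq : Real.sinh (ξ * δ) ^ 2 ≤ (ξ * δ) ^ 2 * Real.cosh (ξ * δ) ^ 2 := by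
            have h2 := pow_le_pow_left₀ hsinh0 ht 2
            rw [mul_pow] at h2
            simpa [sq_abs, mul_pow] using h2
          have hδsq : (ξ * δ) ^ 2 ≤ ξ ^ 2 := by
            have hd2 : δ ^ 2 ≤ 1 := by nlinarith
            calc (ξ * δ) ^ 2 = ξ ^ 2 * δ ^ 2 := by ring
              _ ≤ ξ ^ 2 * 1 := mul_le_mul_of_nonneg_left hd2 hξ2.le
              _ = ξ ^ 2 := mul_one _
          nlinarith [sq_nonneg (Real.sinh (ξ * (η - δ))), hD2, sq_nonneg ξ]
        · -- large ξ: sinh² ≤ cosh²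
          have hsc : Real.sinh (ξ * δ) ^ 2 ≤ Real.cosh (ξ * δ) ^ 2 := by
            nlinarith [Real.cosh_sq_sub_sinh_sq (ξ * δ)]
          nlinarith [sq_nonneg (Real.sinh (ξ * (η - δ))), hD2]
      rw [div_le_iff₀ hD2]
      have hdiv : (1 + ξ ^ 2) * Real.sinh (ξ * (η - δ)) ^ 2 / ξ ^ 2 ≤
          2 * Real.cosh (ξ * δ) ^ 2 := by
        rw [div_le_iff₀ hξ2]
        nlinarith
      nlinarith
  nlinarith

/-- There is `C > 0` such that for all `δ ∈ (0,1]` and all measurable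
`G : ℝ → ℂ`,
`∫_ℝ ∫₀^δ [(1+ξ²) sinh(ξ(η-δ))²/ξ² + cosh(ξ(η-δ))²]/cosh(ξδ)² |G(ξ)|² dη dξ
  ≤ C δ ∫_ℝ (1+ξ²)^{1/2} |G(ξ)|² dξ`, understood in `[0, ∞]`. -/
theorem stmt_9 :
    ∃ C : ℝ, 0 < C ∧ ∀ δ : ℝ, 0 < δ → δ ≤ 1 → ∀ G : ℝ → ℂ, Measurable G →
      ∫⁻ ξ : ℝ, ∫⁻ η in Set.Ioo (0 : ℝ) δ,
          ENNReal.ofReal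
            (((1 + ξ ^ 2) * Real.sinh (ξ * (η - δ)) ^ 2 / ξ ^ 2 +
                Real.cosh (ξ * (η - δ)) ^ 2) / Real.cosh (ξ * δ) ^ 2 *
              ‖G ξ‖ ^ 2) ≤
        ENNReal.ofReal (C * δ) *
          ∫⁻ ξ : ℝ, ENNReal.ofReal ((1 + ξ ^ 2) ^ ((1 : ℝ) / 2) * ‖G ξ‖ ^ 2) := by
  refine ⟨3, by norm_num, ?_⟩
  intro δ hδ hδ1 G hG
  have hinner : ∀ ξ : ℝ, (∫⁻ η in Set.Ioo (0 : ℝ) δ,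
      ENNReal.ofReal
        (((1 + ξ ^ 2) * Real.sinh (ξ * (η - δ)) ^ 2 / ξ ^ 2 +
            Real.cosh (ξ * (η - δ)) ^ 2) / Real.cosh (ξ * δ) ^ 2 *
          ‖G ξ‖ ^ 2)) ≤
      ENNReal.ofReal (3 * δ) *
        ENNReal.ofReal ((1 + ξ ^ 2) ^ ((1 : ℝ) / 2) * ‖G ξ‖ ^ 2) := by
    intro ξ
    have hstep : (∫⁻ η in Set.Ioo (0 : ℝ) δ,
        ENNReal.ofReal
          (((1 + ξ ^ 2) * Real.sinh (ξ * (η - δ)) ^ 2 / ξ ^ 2 +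
              Real.cosh (ξ * (η - δ)) ^ 2) / Real.cosh (ξ * δ) ^ 2 *
            ‖G ξ‖ ^ 2)) ≤
        ∫⁻ _η in Set.Ioo (0 : ℝ) δ,
          ENNReal.ofReal (3 * (1 + ξ ^ 2) ^ ((1 : ℝ) / 2) * ‖G ξ‖ ^ 2) := by
      apply setLIntegral_mono' measurableSet_Ioo
      intro η hη
      apply ENNReal.ofReal_le_ofReal
      have := key_bound δ ξ η hδ hδ1 hη.1 hη.2
      have hn : (0 : ℝ) ≤ ‖G ξ‖ ^ 2 := by positivity
      exact mul_le_mul_of_nonneg_right this hn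
    refine hstep.trans ?_
    rw [setLIntegral_const, Real.volume_Ioo, sub_zero,
      ← ENNReal.ofReal_mul (by positivity)]
    apply le_of_eq
    rw [← ENNReal.ofReal_mul (by positivity)]
    congr 1
    ring
  calc ∫⁻ ξ : ℝ, ∫⁻ η in Set.Ioo (0 : ℝ) δ,
          ENNReal.ofReal
            (((1 + ξ ^ 2) * Real.sinh (ξ * (η - δ)) ^ 2 / ξ ^ 2 +
                Real.cosh (ξ * (η - δ)) ^ 2) / Real.cosh (ξ * δ) ^ 2 *
              ‖G ξ‖ ^ 2)
      ≤ ∫⁻ ξ : ℝ, ENNReal.ofReal (3 * δ) *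
          ENNReal.ofReal ((1 + ξ ^ 2) ^ ((1 : ℝ) / 2) * ‖G ξ‖ ^ 2) :=
        lintegral_mono hinner
    _ = ENNReal.ofReal (3 * δ) *
          ∫⁻ ξ : ℝ, ENNReal.ofReal ((1 + ξ ^ 2) ^ ((1 : ℝ) / 2) * ‖G ξ‖ ^ 2) :=
        lintegral_const_mul' _ _ ENNReal.ofReal_ne_top
end

section
/- Let G : ℝ → ℂ be a measurable function such that ∫_ℝ |ξ| · |G(ξ)|² dξ < ∞. Then ∫_ℝ ∫₀^δ ξ² · ( 2·sinh(ξ(η − δ))² + cosh(ξ(η − δ))² ) / cosh(ξδ)² · |G(ξ)|² dη dξ tends to 0 as δ → 0⁺. -/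
open MeasureTheory Filter


lemma aux_cosh_le_exp (x : ℝ) : Real.cosh x ≤ Real.exp |x| := by
  rw [Real.cosh_eq]
  have h1 := Real.exp_le_exp.mpr (le_abs_self x)
  have h2 := Real.exp_le_exp.mpr (neg_le_abs x)
  linarith

lemma aux_exp_le_cosh (x : ℝ) : Real.exp |x| ≤ 2 * Real.cosh x := by
  rw [Real.cosh_eq]
  rcases abs_cases x with ⟨h, _⟩ | ⟨h, _⟩ <;> rw [h] <;>
    nlinarith [Real.exp_pos x, Real.exp_pos (-x)]

lemma aux_keyA (ξ δ η c : ℝ) (hc : 0 ≤ c) (hδ : 0 < δ) (h1 : 0 < η) (h2 : η < δ) :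
    ξ ^ 2 * (2 * Real.sinh (ξ * (η - δ)) ^ 2 + Real.cosh (ξ * (η - δ)) ^ 2) /
        Real.cosh (ξ * δ) ^ 2 * c ≤ 3 * ξ ^ 2 * c := by
  set a := ξ * (η - δ) with ha
  set b := ξ * δ with hb
  have hD : (0:ℝ) < Real.cosh b ^ 2 := by positivity
  have habs : |a| ≤ |b| := by
    rw [ha, hb, abs_mul, abs_mul]
    have : |η - δ| ≤ |δ| := by rw [abs_of_nonpos (by linarith), abs_of_pos hδ]; linarith
    exact mul_le_mul_of_nonneg_left this (abs_nonneg ξ)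
  have hco : Real.cosh a ≤ Real.cosh b := Real.cosh_le_cosh.mpr habs
  have hN : 2 * Real.sinh a ^ 2 + Real.cosh a ^ 2 ≤ 3 * Real.cosh b ^ 2 := by
    nlinarith [Real.sinh_sq a, Real.cosh_pos a, Real.cosh_pos b]
  rw [div_mul_eq_mul_div, div_le_iff₀ hD]
  calc ξ ^ 2 * (2 * Real.sinh a ^ 2 + Real.cosh a ^ 2) * c
      = (ξ ^ 2 * c) * (2 * Real.sinh a ^ 2 + Real.cosh a ^ 2) := by ring
    _ ≤ (ξ ^ 2 * c) * (3 * Real.cosh b ^ 2) :=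
        mul_le_mul_of_nonneg_left hN (by positivity)
    _ = 3 * ξ ^ 2 * c * Real.cosh b ^ 2 := by ring

lemma aux_keyB (ξ δ η c : ℝ) (hc : 0 ≤ c) (hδ : 0 < δ) (h1 : 0 < η) (h2 : η < δ) :
    ξ ^ 2 * (2 * Real.sinh (ξ * (η - δ)) ^ 2 + Real.cosh (ξ * (η - δ)) ^ 2) /
        Real.cosh (ξ * δ) ^ 2 * c
      ≤ 12 * ξ ^ 2 * Real.exp (-(2 * |ξ| * η)) * c := by
  set a := ξ * (η - δ) with ha
  set b := ξ * δ with hb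
  have hD : (0:ℝ) < Real.cosh b ^ 2 := by positivity
  have habs : |a| = |ξ| * (δ - η) := by
    rw [ha, abs_mul, abs_of_nonpos (by linarith : η - δ ≤ 0)]; ring
  have hbabs : |b| = |ξ| * δ := by rw [hb, abs_mul, abs_of_pos hδ]
  have e1 : Real.cosh a ≤ Real.exp |a| := aux_cosh_le_exp a
  have e2 : Real.exp |b| ≤ 2 * Real.cosh b := aux_exp_le_cosh b
  have h3 : Real.exp |a| ^ 2 = Real.exp (-(2 * |ξ| * η)) * Real.exp |b| ^ 2 := by
    rw [sq, sq, ← Real.exp_add, ← Real.exp_add, ← Real.exp_add]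
    congr 1
    rw [habs, hbabs]; ring
  have h4 : Real.cosh a ^ 2 ≤ Real.exp |a| ^ 2 :=
    pow_le_pow_left₀ (Real.cosh_pos a).le e1 2
  have h5 : Real.exp |b| ^ 2 ≤ 4 * Real.cosh b ^ 2 := by
    nlinarith [Real.exp_pos |b|, Real.cosh_pos b]
  have h6 : Real.exp (-(2 * |ξ| * η)) * Real.exp |b| ^ 2
      ≤ Real.exp (-(2 * |ξ| * η)) * (4 * Real.cosh b ^ 2) :=
    mul_le_mul_of_nonneg_left h5 (Real.exp_pos _).le
  have hN : 2 * Real.sinh a ^ 2 + Real.cosh a ^ 2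
      ≤ 12 * Real.exp (-(2 * |ξ| * η)) * Real.cosh b ^ 2 := by
    nlinarith [Real.sinh_sq a, h4, h6, h3]
  rw [div_mul_eq_mul_div, div_le_iff₀ hD]
  calc ξ ^ 2 * (2 * Real.sinh a ^ 2 + Real.cosh a ^ 2) * c
      = (ξ ^ 2 * c) * (2 * Real.sinh a ^ 2 + Real.cosh a ^ 2) := by ring
    _ ≤ (ξ ^ 2 * c) * (12 * Real.exp (-(2 * |ξ| * η)) * Real.cosh b ^ 2) :=
        mul_le_mul_of_nonneg_left hN (by positivity)
    _ = 12 * ξ ^ 2 * Real.exp (-(2 * |ξ| * η)) * c * Real.cosh b ^ 2 := by ring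

lemma aux_exp_lintegral (b : ℝ) (hb : 0 < b) (δ : ℝ) :
    ∫⁻ η in Set.Ioo (0:ℝ) δ, ENNReal.ofReal (Real.exp (-(b * η)))
      ≤ ENNReal.ofReal (1 / b) := by
  have hint : IntegrableOn (fun x : ℝ => Real.exp (-b * x)) (Set.Ioi 0) :=
    exp_neg_integrableOn_Ioi 0 hb
  have hval : ∫ x in Set.Ioi (0:ℝ), Real.exp (-b * x) = 1 / b := by
    have hderiv : ∀ x ∈ Set.Ici (0:ℝ),
        HasDerivAt (fun x : ℝ => -Real.exp (-b * x) / b) (Real.exp (-b * x)) x := by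
      intro x _
      have := (((hasDerivAt_id x).const_mul (-b)).exp).neg.div_const b
      simpa [mul_comm, hb.ne'] using this
    have htend : Tendsto (fun x : ℝ => -Real.exp (-b * x) / b) atTop (nhds 0) := by
      have : Tendsto (fun x : ℝ => Real.exp (-b * x)) atTop (nhds 0) :=
        Real.tendsto_exp_atBot.comp (tendsto_id.const_mul_atTop_of_neg (by linarith))
      simpa using (this.neg.div_const b)
    have := integral_Ioi_of_hasDerivAt_of_tendsto' hderiv hint htend
    rw [this]; field_simp; simp
  calc ∫⁻ η in Set.Ioo (0:ℝ) δ, ENNReal.ofReal (Real.exp (-(b * η)))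
      ≤ ∫⁻ η in Set.Ioi (0:ℝ), ENNReal.ofReal (Real.exp (-(b * η))) :=
        lintegral_mono_set Set.Ioo_subset_Ioi_self
    _ = ENNReal.ofReal (∫ x in Set.Ioi (0:ℝ), Real.exp (-b * x)) := by
        simp only [← neg_mul]
        rw [← ofReal_integral_eq_lintegral_ofReal hint
          (Filter.Eventually.of_forall fun x => (Real.exp_pos _).le)]
    _ = ENNReal.ofReal (1 / b) := by rw [hval]

/-- If `G : ℝ → ℂ` is measurable with `∫_ℝ |ξ| |G(ξ)|² dξ < ∞`, then
`∫_ℝ ∫₀^δ ξ² (2 sinh(ξ(η-δ))² + cosh(ξ(η-δ))²)/cosh(ξδ)² |G(ξ)|² dη dξ → 0`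
as `δ → 0⁺`. -/
theorem stmt_10 (G : ℝ → ℂ) (hG : Measurable G)
    (hint : ∫⁻ ξ : ℝ, ENNReal.ofReal (|ξ| * ‖G ξ‖ ^ 2) < ⊤) :
    Tendsto (fun δ : ℝ =>
        ∫⁻ ξ : ℝ, ∫⁻ η in Set.Ioo (0 : ℝ) δ,
          ENNReal.ofReal (ξ ^ 2 *
            (2 * Real.sinh (ξ * (η - δ)) ^ 2 + Real.cosh (ξ * (η - δ)) ^ 2) /
              Real.cosh (ξ * δ) ^ 2 * ‖G ξ‖ ^ 2))
      (nhdsWithin 0 (Set.Ioi 0)) (nhds 0) := by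
  have key := tendsto_lintegral_filter_of_dominated_convergence (μ := volume)
    (l := nhdsWithin (0:ℝ) (Set.Ioi 0))
    (f := fun _ : ℝ => (0 : ENNReal))
    (F := fun δ ξ => ∫⁻ η in Set.Ioo (0 : ℝ) δ,
          ENNReal.ofReal (ξ ^ 2 *
            (2 * Real.sinh (ξ * (η - δ)) ^ 2 + Real.cosh (ξ * (η - δ)) ^ 2) /
              Real.cosh (ξ * δ) ^ 2 * ‖G ξ‖ ^ 2))
    (fun ξ : ℝ => ENNReal.ofReal (6 * (|ξ| * ‖G ξ‖ ^ 2)))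
    ?_ ?_ ?_ ?_
  · simpa using key
  · -- measurability
    refine Filter.Eventually.of_forall fun δ => ?_
    have hm : Measurable (Function.uncurry fun ξ η : ℝ => ENNReal.ofReal (ξ ^ 2 *
            (2 * Real.sinh (ξ * (η - δ)) ^ 2 + Real.cosh (ξ * (η - δ)) ^ 2) /
              Real.cosh (ξ * δ) ^ 2 * ‖G ξ‖ ^ 2)) := by
      apply Measurable.ennreal_ofReal
      fun_prop
    exact hm.lintegral_prod_right' (ν := volume.restrict (Set.Ioo 0 δ))
  · -- domination
    filter_upwards [self_mem_nhdsWithin] with δ hδ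
    refine Filter.Eventually.of_forall fun ξ => ?_
    rcases eq_or_ne ξ 0 with rfl | hξ
    · simp
    have hδ' : (0:ℝ) < δ := hδ
    have hc : (0:ℝ) ≤ ‖G ξ‖ ^ 2 := by positivity
    calc ∫⁻ η in Set.Ioo (0 : ℝ) δ,
          ENNReal.ofReal (ξ ^ 2 *
            (2 * Real.sinh (ξ * (η - δ)) ^ 2 + Real.cosh (ξ * (η - δ)) ^ 2) /
              Real.cosh (ξ * δ) ^ 2 * ‖G ξ‖ ^ 2)
        ≤ ∫⁻ η in Set.Ioo (0 : ℝ) δ,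
            ENNReal.ofReal (12 * ξ ^ 2 * Real.exp (-(2 * |ξ| * η)) * ‖G ξ‖ ^ 2) := by
          refine setLIntegral_mono (Measurable.ennreal_ofReal (by fun_prop))
            fun η hη => ENNReal.ofReal_le_ofReal
              (aux_keyB ξ δ η (‖G ξ‖ ^ 2) hc hδ' hη.1 hη.2)
      _ = ∫⁻ η in Set.Ioo (0 : ℝ) δ,
            ENNReal.ofReal (12 * ξ ^ 2 * ‖G ξ‖ ^ 2) *
              ENNReal.ofReal (Real.exp (-(2 * |ξ| * η))) := by
          refine setLIntegral_congr_fun measurableSet_Ioo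
            (fun η _ => ?_)
          rw [← ENNReal.ofReal_mul (by positivity)]
          congr 1; ring
      _ = ENNReal.ofReal (12 * ξ ^ 2 * ‖G ξ‖ ^ 2) *
            ∫⁻ η in Set.Ioo (0 : ℝ) δ, ENNReal.ofReal (Real.exp (-(2 * |ξ| * η))) :=
          lintegral_const_mul' _ _ ENNReal.ofReal_ne_top
      _ ≤ ENNReal.ofReal (12 * ξ ^ 2 * ‖G ξ‖ ^ 2) * ENNReal.ofReal (1 / (2 * |ξ|)) := by
          gcongr
          exact aux_exp_lintegral (2 * |ξ|) (by positivity) δ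
      _ ≤ ENNReal.ofReal (6 * (|ξ| * ‖G ξ‖ ^ 2)) := by
          rw [← ENNReal.ofReal_mul (by positivity)]
          apply ENNReal.ofReal_le_ofReal
          apply le_of_eq
          have h2 : ξ ^ 2 = |ξ| ^ 2 := (sq_abs ξ).symm
          have h3 : |ξ| ≠ 0 := abs_ne_zero.mpr hξ
          field_simp
          rw [h2]
          ring
  · -- finiteness of the bound
    have : ∫⁻ ξ : ℝ, ENNReal.ofReal (6 * (|ξ| * ‖G ξ‖ ^ 2))
        = ENNReal.ofReal 6 * ∫⁻ ξ : ℝ, ENNReal.ofReal (|ξ| * ‖G ξ‖ ^ 2) := by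
      rw [← lintegral_const_mul' _ _ ENNReal.ofReal_ne_top]
      refine lintegral_congr fun ξ => ?_
      rw [← ENNReal.ofReal_mul (by norm_num)]
    rw [this]
    exact ENNReal.mul_ne_top ENNReal.ofReal_ne_top hint.ne
  · -- pointwise convergence
    refine Filter.Eventually.of_forall fun ξ => ?_
    have hupper : ∀ δ ∈ Set.Ioi (0:ℝ),
        (∫⁻ η in Set.Ioo (0 : ℝ) δ,
          ENNReal.ofReal (ξ ^ 2 *
            (2 * Real.sinh (ξ * (η - δ)) ^ 2 + Real.cosh (ξ * (η - δ)) ^ 2) /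
              Real.cosh (ξ * δ) ^ 2 * ‖G ξ‖ ^ 2))
          ≤ ENNReal.ofReal (3 * ξ ^ 2 * ‖G ξ‖ ^ 2 * δ) := by
      intro δ hδ
      have hδ' : (0:ℝ) < δ := hδ
      have hc : (0:ℝ) ≤ ‖G ξ‖ ^ 2 := by positivity
      calc (∫⁻ η in Set.Ioo (0 : ℝ) δ,
          ENNReal.ofReal (ξ ^ 2 *
            (2 * Real.sinh (ξ * (η - δ)) ^ 2 + Real.cosh (ξ * (η - δ)) ^ 2) /
              Real.cosh (ξ * δ) ^ 2 * ‖G ξ‖ ^ 2))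
          ≤ ∫⁻ _ in Set.Ioo (0 : ℝ) δ, ENNReal.ofReal (3 * ξ ^ 2 * ‖G ξ‖ ^ 2) :=
            setLIntegral_mono measurable_const
              fun η hη => ENNReal.ofReal_le_ofReal
                (aux_keyA ξ δ η (‖G ξ‖ ^ 2) hc hδ' hη.1 hη.2)
        _ = ENNReal.ofReal (3 * ξ ^ 2 * ‖G ξ‖ ^ 2) * volume (Set.Ioo (0:ℝ) δ) :=
            setLIntegral_const _ _
        _ = ENNReal.ofReal (3 * ξ ^ 2 * ‖G ξ‖ ^ 2 * δ) := by
            rw [Real.volume_Ioo, ← ENNReal.ofReal_mul (by positivity)]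
            norm_num
    have htend : Tendsto (fun δ : ℝ => ENNReal.ofReal (3 * ξ ^ 2 * ‖G ξ‖ ^ 2 * δ))
        (nhdsWithin 0 (Set.Ioi 0)) (nhds 0) := by
      have h1 : Tendsto (fun δ : ℝ => 3 * ξ ^ 2 * ‖G ξ‖ ^ 2 * δ) (nhds 0) (nhds 0) := by
        simpa using (continuous_mul_left (3 * ξ ^ 2 * ‖G ξ‖ ^ 2)).tendsto (0:ℝ)
      have h2 := (ENNReal.continuous_ofReal.tendsto 0).comp
        (h1.mono_left (nhdsWithin_le_nhds (s := Set.Ioi (0:ℝ))))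
      simpa [Function.comp_def] using h2
    refine tendsto_of_tendsto_of_tendsto_of_le_of_le' tendsto_const_nhds htend
      (Filter.Eventually.of_forall fun δ => zero_le) ?_
    filter_upwards [self_mem_nhdsWithin] with δ hδ using hupper δ hδ
end
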